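/- Under Assumption 1, for every x ∈ Bᶜ one has Σ_{z∈V} p(z|x) q(z) > 0 if and only if the set B is reachable from x; equivalently, x ∈ V⁺ := {x ∈ Bᶜ : Σ_{z∈V} p(z|x) q(z) > 0} if and only if x ∈ Bᶜ and B is reachable from x. -/

import Mathlib

open scoped ENNReal

-- `pathProb p x l` : probability that the chain with transition matrix `p` follows the
-- finite path `x :: l` (here `p x y` is the probability `p(y|x)` of jumping from `x` to `y`).
noncomputable def pathProb {V : Type*} (p : V → V → ℝ) : V → List V → ℝ≥0∞
  | _, [] => 1
  | x, y :: ys => ENNReal.ofReal (p x y) * pathProb p y ys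

-- The finite path lies outside `S ∪ T` at all nodes except its last one, which lies in `S`;
-- such paths realize exactly the event `τ_S < τ_T`.
def HitsFirst {V : Type*} (S T : Finset V) : List V → Prop
  | [] => False
  | [x] => x ∈ S
  | x :: y :: ys => x ∉ S ∧ x ∉ T ∧ HitsFirst S T (y :: ys)

-- `hitProb p S T x` : the probability `P(τ_{S,x} < τ_{T,x})` that the chain started at `x`
-- hits `S` strictly before `T`, written as the sum over all first-passage paths to `S`.
open Classical in
noncomputable def hitProb {V : Type*} (p : V → V → ℝ) (S T : Finset V) (x : V) : ℝ≥0∞ :=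
  ∑' l : List V, if HitsFirst S T (x :: l) then pathProb p x l else 0

-- `S` (with `S = A` or `S = B`) is reachable from `x` : there is a finite path of positive
-- transition probabilities from `x` to `S` whose interior nodes avoid `A ∪ B`.
def ReachableFrom {V : Type*} [DecidableEq V] (p : V → V → ℝ) (A B S : Finset V) (x : V) :
    Prop :=
  ∃ (k : ℕ) (c : ℕ → V), c 0 = x ∧ c k ∈ S ∧
    (∀ l, 1 ≤ l → l ≤ k - 1 → c l ∉ A ∪ B) ∧
    ∀ l, l < k → 0 < p (c l) (c (l + 1))

-- Assumption 1 of the paper.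
def Assumption1 {V : Type*} [Fintype V] [DecidableEq V] (p : V → V → ℝ) (A B : Finset V) :
    Prop :=
  ((A ∪ B)ᶜ : Finset V).Nonempty ∧
  (∀ x ∈ (A ∪ B)ᶜ, ReachableFrom p A B A x ∨ ReachableFrom p A B B x) ∧
  ∀ x ∈ A, ReachableFrom p A B B x


section Aux

open Classical

set_option linter.unusedSectionVars false

variable {V : Type*} [Fintype V] [DecidableEq V] (p : V → V → ℝ) (A B : Finset V)

lemma pathProb_ne_zero_iff (x : V) (l : List V) :
    pathProb p x l ≠ 0 ↔ List.Chain (fun a b => 0 < p a b) x l := by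
  induction l generalizing x with
  | nil => simp [pathProb, List.Chain.nil]
  | cons y ys ih =>
    simp only [pathProb, ne_eq, mul_eq_zero, not_or, ENNReal.ofReal_eq_zero, not_le,
      List.Chain, List.chain_cons]
    exact and_congr Iff.rfl (ih y)

lemma reachable_cons (x z : V) (hpz : 0 < p x z)
    (h : z ∈ B ∨ (z ∉ A ∪ B ∧ ReachableFrom p A B B z)) :
    ReachableFrom p A B B x := by
  rcases h with hz | ⟨hz, k, c, hc0, hck, hint, hpos⟩
  · refine ⟨1, fun n => if n = 0 then x else z, by simp, by simp [hz], by omega, ?_⟩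
    intro l hl
    interval_cases l
    simpa using hpz
  · refine ⟨k + 1, fun n => if n = 0 then x else c (n - 1), by simp, by simp [hck], ?_, ?_⟩
    · intro l h1 h2
      simp only [if_neg (by omega : l ≠ 0)]
      rcases Nat.lt_or_ge l 2 with h | h
      · have hl1 : l = 1 := by omega
        subst hl1
        simpa [hc0] using hz
      · exact hint (l - 1) (by omega) (by omega)
    · intro l hl
      rcases Nat.eq_zero_or_pos l with rfl | hlpos
      · simpa [hc0] using hpz
      · simp only [if_neg (by omega : l ≠ 0), if_neg (by omega : l + 1 ≠ 0),
          Nat.add_sub_cancel]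
        have := hpos (l - 1) (by omega)
        simpa [show l - 1 + 1 = l from by omega] using this

lemma hitsFirst_reachable : ∀ (l : List V) (z : V),
    HitsFirst B A (z :: l) → List.Chain (fun a b => 0 < p a b) z l →
    (z ∈ B ∨ z ∉ A ∪ B) ∧ ReachableFrom p A B B z := by
  intro l
  induction l with
  | nil =>
    intro z hz _
    have hz' : z ∈ B := hz
    exact ⟨Or.inl hz', 0, fun _ => z, rfl, hz', by omega, by omega⟩
  | cons y ys ih =>
    intro z hz hchain
    obtain ⟨hzB, hzA, htail⟩ := hz
    rw [List.Chain, List.chain_cons] at hchain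
    obtain ⟨hpzy, hch⟩ := hchain
    obtain ⟨hy, hreach⟩ := ih y htail hch
    refine ⟨Or.inr (by simp [Finset.mem_union, hzA, hzB]), ?_⟩
    refine reachable_cons p A B z y hpzy ?_
    rcases hy with h | h
    · exact Or.inl h
    · exact Or.inr ⟨h, hreach⟩

lemma exists_hitsFirst : ∀ (k : ℕ) (c : ℕ → V), c k ∈ B →
    (∀ l, l < k → c l ∉ A ∪ B) → (∀ l, l < k → 0 < p (c l) (c (l + 1))) →
    ∃ L, HitsFirst B A (c 0 :: L) ∧ List.Chain (fun a b => 0 < p a b) (c 0) L := by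
  intro k
  induction k with
  | zero =>
    intro c hc _ _
    exact ⟨[], hc, List.Chain.nil⟩
  | succ k ih =>
    intro c hck hint hpos
    obtain ⟨L, hL, hch⟩ := ih (fun n => c (n + 1)) hck (fun l hl => hint (l + 1) (by omega))
      (fun l hl => hpos (l + 1) (by omega))
    have h0 : c 0 ∉ A ∪ B := hint 0 (by omega)
    simp only [Finset.mem_union, not_or] at h0
    exact ⟨c 1 :: L, ⟨h0.2, h0.1, hL⟩, List.chain_cons.mpr ⟨hpos 0 (by omega), hch⟩⟩

end Aux

/-- Under Assumption 1, for every `x ∈ Bᶜ` one has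
`Σ_{z∈V} p(z|x) q(z) > 0` if and only if the set `B` is reachable from `x`; here
`q z = hitProb p B A z` is the committor.  Equivalently, `x` belongs to
`V⁺ = {x ∈ Bᶜ : Σ_{z∈V} p(z|x) q(z) > 0}` iff `x ∈ Bᶜ` and `B` is reachable from `x`. -/
theorem mem_Vplus_iff_reachable {V : Type*} [Fintype V] [DecidableEq V]
    (p : V → V → ℝ) (A B : Finset V)
    (hAB : Disjoint A B) (hA : A.Nonempty) (hB : B.Nonempty)
    (hp0 : ∀ x y, 0 ≤ p x y) (hp1 : ∀ x, ∑ y, p x y = 1)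
    (h1 : Assumption1 p A B) :
    ∀ x : V, x ∉ B →
      ((0 < ∑ z, ENNReal.ofReal (p x z) * hitProb p B A z) ↔ ReachableFrom p A B B x) := by
  intro x hxB
  classical
  constructor
  · intro hsum
    obtain ⟨z, -, hz⟩ := Finset.exists_ne_zero_of_sum_ne_zero hsum.ne'
    rw [mul_ne_zero_iff] at hz
    have hpzpos : 0 < p x z := ENNReal.ofReal_pos.mp (pos_iff_ne_zero.mpr hz.1)
    have hex : ∃ l, HitsFirst B A (z :: l) ∧ pathProb p z l ≠ 0 := by
      by_contra hcon
      push_neg at hcon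
      apply hz.2
      rw [hitProb, ENNReal.tsum_eq_zero]
      intro l
      split_ifs with h
      · exact hcon l h
      · rfl
    obtain ⟨l, hHF, hpne⟩ := hex
    have hch := (pathProb_ne_zero_iff p z l).mp hpne
    obtain ⟨hzmem, hreach⟩ := hitsFirst_reachable p A B l z hHF hch
    refine reachable_cons p A B x z hpzpos ?_
    rcases hzmem with h | h
    · exact Or.inl h
    · exact Or.inr ⟨h, hreach⟩
  · rintro ⟨k, c, hc0, hck, hint, hpos⟩
    have hk : k ≠ 0 := by
      rintro rfl
      exact hxB (hc0 ▸ hck)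
    obtain ⟨L, hL, hch⟩ := exists_hitsFirst p A B (k - 1) (fun n => c (n + 1))
      (by simpa [show k - 1 + 1 = k from by omega] using hck)
      (fun l hl => hint (l + 1) (by omega) (by omega))
      (fun l hl => hpos (l + 1) (by omega))
    have hle : pathProb p (c 1) L ≤ hitProb p B A (c 1) := by
      rw [hitProb]
      have := ENNReal.le_tsum
        (f := fun l => if HitsFirst B A (c 1 :: l) then pathProb p (c 1) l else 0) L
      simpa [hL] using this
    have hne : pathProb p (c 1) L ≠ 0 := (pathProb_ne_zero_iff p (c 1) L).mpr hch
    have hterm : 0 < ENNReal.ofReal (p x (c 1)) * hitProb p B A (c 1) := by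
      refine ENNReal.mul_pos ?_ ?_
      · have := hpos 0 (by omega)
        rw [hc0] at this
        exact (ENNReal.ofReal_pos.mpr this).ne' 
      · exact fun h => hne (le_antisymm (h ▸ hle) zero_le)
    exact hterm.trans_le (Finset.single_le_sum (f := fun z => ENNReal.ofReal (p x z) * hitProb p B A z)
      (fun i _ => zero_le) (Finset.mem_univ (c 1)))
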